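/- Let w ∈ ℝⁿ have strictly positive entries and let F₀,…,F_{J+1} be n×n real matrices forming a frame with bounds 0 < c ≤ C, i.e., c‖x‖_w² ≤ Σ_{j=0}^{J+1} ‖F_j x‖_w² ≤ C‖x‖_w² for all x ∈ ℝⁿ. Then for every m ≥ 1 and all x, y ∈ ℝⁿ: (c/2)^m ‖x − y‖_w² ≤ Σ over all tuples (j₁,k₁,…,j_m,k_m) with jᵢ ∈ {0,…,J+1}, kᵢ ∈ {1,2} of ‖B[j₁,k₁,…,j_m,k_m](x) − B[j₁,k₁,…,j_m,k_m](y)‖_w² ≤ C^m ‖x − y‖_w². That is, the m-layer BLIS module B_m is bi-Lipschitz on the weighted space. -/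
import Mathlib

open Matrix

noncomputable def wnorm2 {n : ℕ} (w x : Fin n → ℝ) : ℝ := ∑ i, (w i) ^ 2 * (x i) ^ 2

def act {n : ℕ} (k : Fin 2) (x : Fin n → ℝ) : Fin n → ℝ :=
  if k = 0 then (fun i => max (x i) 0) else (fun i => max (-(x i)) 0)

noncomputable def blis {n N : ℕ} (F : Fin N → Matrix (Fin n) (Fin n) ℝ) :
    (m : ℕ) → (Fin m → Fin N) → (Fin m → Fin 2) → (Fin n → ℝ) → Fin n → ℝ
  | 0, _, _, x => x
  | m + 1, js, ks, x =>
      act (ks (Fin.last m)) ((F (js (Fin.last m))) *ᵥ blis F m (Fin.init js) (Fin.init ks) x)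

lemma relu_sq (a b : ℝ) :
    (a - b) ^ 2 / 2 ≤ (max a 0 - max b 0) ^ 2 + (max (-a) 0 - max (-b) 0) ^ 2 ∧
    (max a 0 - max b 0) ^ 2 + (max (-a) 0 - max (-b) 0) ^ 2 ≤ (a - b) ^ 2 := by
  have h : ∀ t : ℝ, max t 0 - max (-t) 0 = t := by
    intro t
    rcases le_total t 0 with ht | ht
    · rw [max_eq_right ht, max_eq_left (by linarith)]; ring
    · rw [max_eq_left ht, max_eq_right (by linarith)]; ring
  have huv : (max a 0 - max b 0) - (max (-a) 0 - max (-b) 0) = a - b := by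
    have := h a; have := h b; linarith
  have hmul : (max a 0 - max b 0) * (max (-a) 0 - max (-b) 0) ≤ 0 := by
    rcases le_total a b with h | h
    · exact mul_nonpos_of_nonpos_of_nonneg (sub_nonpos.2 (max_le_max h le_rfl))
        (sub_nonneg.2 (max_le_max (neg_le_neg h) le_rfl))
    · exact mul_nonpos_of_nonneg_of_nonpos (sub_nonneg.2 (max_le_max h le_rfl))
        (sub_nonpos.2 (max_le_max (neg_le_neg h) le_rfl))
  rw [← huv]
  constructor
  · nlinarith [sq_nonneg (max a 0 - max b 0 + (max (-a) 0 - max (-b) 0))]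
  · nlinarith

lemma wnorm2_act (n : ℕ) (w : Fin n → ℝ) (v v' : Fin n → ℝ) :
    wnorm2 w (v - v') / 2 ≤ ∑ k : Fin 2, wnorm2 w (act k v - act k v') ∧
    ∑ k : Fin 2, wnorm2 w (act k v - act k v') ≤ wnorm2 w (v - v') := by
  have key : ∑ k : Fin 2, wnorm2 w (act k v - act k v')
      = ∑ i, (w i) ^ 2 * ((max (v i) 0 - max (v' i) 0) ^ 2 + (max (-(v i)) 0 - max (-(v' i)) 0) ^ 2) := by
    rw [Fin.sum_univ_two]
    simp only [wnorm2, act]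
    norm_num
    rw [← Finset.sum_add_distrib]
    apply Finset.sum_congr rfl
    intro i _
    first
      | (simp only [Pi.sub_apply]; ring)
      | ring
  rw [key]
  constructor
  · rw [wnorm2, Finset.sum_div]
    apply Finset.sum_le_sum
    intro i _
    have := (relu_sq (v i) (v' i)).1
    have hw2 : (0:ℝ) ≤ (w i)^2 := sq_nonneg _
    simp only [Pi.sub_apply]
    nlinarith
  · apply Finset.sum_le_sum
    intro i _
    have := (relu_sq (v i) (v' i)).2
    have hw2 : (0:ℝ) ≤ (w i)^2 := sq_nonneg _
    simp only [Pi.sub_apply]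
    nlinarith

lemma snoc_sum {N : ℕ} (m : ℕ) (g : (Fin (m+1) → Fin N) → ℝ) :
    ∑ js, g js = ∑ js : Fin m → Fin N, ∑ j, g (Fin.snoc js j) := by
  rw [← Equiv.sum_comp (Fin.snocEquiv (fun _ => Fin N)) g, Fintype.sum_prod_type,
    Finset.sum_comm]
  apply Finset.sum_congr rfl; intro js _
  apply Finset.sum_congr rfl; intro j _
  simp [Fin.snocEquiv]

theorem blis_biLipschitz {n J : ℕ} (w : Fin n → ℝ) (hw : ∀ i, 0 < w i)
    (F : Fin (J + 2) → Matrix (Fin n) (Fin n) ℝ) (c C : ℝ) (hc : 0 < c) (hcC : c ≤ C)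
    (hframe : ∀ x : Fin n → ℝ,
      c * wnorm2 w x ≤ ∑ j, wnorm2 w ((F j) *ᵥ x) ∧
      ∑ j, wnorm2 w ((F j) *ᵥ x) ≤ C * wnorm2 w x) :
    ∀ m : ℕ, 1 ≤ m → ∀ x y : Fin n → ℝ,
      (c / 2) ^ m * wnorm2 w (x - y) ≤
        (∑ js : Fin m → Fin (J + 2), ∑ ks : Fin m → Fin 2,
          wnorm2 w (blis F m js ks x - blis F m js ks y)) ∧
      (∑ js : Fin m → Fin (J + 2), ∑ ks : Fin m → Fin 2,
          wnorm2 w (blis F m js ks x - blis F m js ks y)) ≤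
        C ^ m * wnorm2 w (x - y) := by
  have step : ∀ u u' : Fin n → ℝ,
      c / 2 * wnorm2 w (u - u') ≤
        ∑ j, ∑ k : Fin 2, wnorm2 w (act k ((F j) *ᵥ u) - act k ((F j) *ᵥ u')) ∧
      (∑ j, ∑ k : Fin 2, wnorm2 w (act k ((F j) *ᵥ u) - act k ((F j) *ᵥ u'))) ≤
        C * wnorm2 w (u - u') := by
    intro u u'
    have hsub : ∀ j : Fin (J+2), (F j) *ᵥ u - (F j) *ᵥ u' = (F j) *ᵥ (u - u') := by
      intro j; rw [Matrix.mulVec_sub]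
    constructor
    · calc c / 2 * wnorm2 w (u - u') = (c * wnorm2 w (u - u')) / 2 := by ring
        _ ≤ (∑ j, wnorm2 w ((F j) *ᵥ (u - u'))) / 2 := by
            apply div_le_div_of_nonneg_right (hframe _).1
            norm_num
        _ = ∑ j, wnorm2 w ((F j) *ᵥ u - (F j) *ᵥ u') / 2 := by
            rw [Finset.sum_div]
            apply Finset.sum_congr rfl; intro j _; rw [hsub]
        _ ≤ _ := by
            apply Finset.sum_le_sum
            intro j _
            exact (wnorm2_act n w _ _).1
    · calc (∑ j, ∑ k : Fin 2, wnorm2 w (act k ((F j) *ᵥ u) - act k ((F j) *ᵥ u')))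
          ≤ ∑ j, wnorm2 w ((F j) *ᵥ u - (F j) *ᵥ u') := by
            apply Finset.sum_le_sum; intro j _; exact (wnorm2_act n w _ _).2
        _ = ∑ j, wnorm2 w ((F j) *ᵥ (u - u')) := by
            apply Finset.sum_congr rfl; intro j _; rw [hsub]
        _ ≤ C * wnorm2 w (u - u') := (hframe _).2
  have main : ∀ m : ℕ, ∀ x y : Fin n → ℝ,
      (c / 2) ^ m * wnorm2 w (x - y) ≤
        (∑ js : Fin m → Fin (J + 2), ∑ ks : Fin m → Fin 2,
          wnorm2 w (blis F m js ks x - blis F m js ks y)) ∧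
      (∑ js : Fin m → Fin (J + 2), ∑ ks : Fin m → Fin 2,
          wnorm2 w (blis F m js ks x - blis F m js ks y)) ≤
        C ^ m * wnorm2 w (x - y) := by
    intro m
    induction m with
    | zero =>
      intro x y
      simp [blis]
    | succ m ih =>
      intro x y
      have reindex :
          (∑ js : Fin (m+1) → Fin (J + 2), ∑ ks : Fin (m+1) → Fin 2,
            wnorm2 w (blis F (m+1) js ks x - blis F (m+1) js ks y))
          = ∑ js : Fin m → Fin (J + 2), ∑ ks : Fin m → Fin 2,
              ∑ j, ∑ k : Fin 2,
                wnorm2 w (act k ((F j) *ᵥ blis F m js ks x) - act k ((F j) *ᵥ blis F m js ks y)) := by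
        rw [snoc_sum]
        apply Finset.sum_congr rfl; intro js _
        rw [show (∑ j, ∑ ks : Fin (m+1) → Fin 2,
            wnorm2 w (blis F (m+1) (Fin.snoc js j) ks x - blis F (m+1) (Fin.snoc js j) ks y))
          = ∑ j, ∑ ks : Fin m → Fin 2, ∑ k : Fin 2,
            wnorm2 w (act k ((F j) *ᵥ blis F m js ks x) - act k ((F j) *ᵥ blis F m js ks y)) from ?_]
        · exact Finset.sum_comm
        · apply Finset.sum_congr rfl; intro j _
          rw [snoc_sum]
          apply Finset.sum_congr rfl; intro ks _
          apply Finset.sum_congr rfl; intro k _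
          simp [blis, Fin.init_snoc, Fin.snoc_last]
      rw [reindex]
      have hC0 : (0:ℝ) ≤ C := le_trans hc.le hcC
      constructor
      · calc (c/2)^(m+1) * wnorm2 w (x - y)
            = (c/2) * ((c/2)^m * wnorm2 w (x-y)) := by ring
          _ ≤ (c/2) * (∑ js : Fin m → Fin (J + 2), ∑ ks : Fin m → Fin 2,
                wnorm2 w (blis F m js ks x - blis F m js ks y)) := by
              apply mul_le_mul_of_nonneg_left (ih x y).1 (by positivity)
          _ = ∑ js : Fin m → Fin (J + 2), ∑ ks : Fin m → Fin 2,
                (c/2) * wnorm2 w (blis F m js ks x - blis F m js ks y) := by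
              rw [Finset.mul_sum]
              apply Finset.sum_congr rfl; intro js _; rw [Finset.mul_sum]
          _ ≤ _ := by
              apply Finset.sum_le_sum; intro js _
              apply Finset.sum_le_sum; intro ks _
              exact (step _ _).1
      · calc (∑ js : Fin m → Fin (J + 2), ∑ ks : Fin m → Fin 2,
                ∑ j, ∑ k : Fin 2,
                wnorm2 w (act k ((F j) *ᵥ blis F m js ks x) - act k ((F j) *ᵥ blis F m js ks y)))
            ≤ ∑ js : Fin m → Fin (J + 2), ∑ ks : Fin m → Fin 2,
                C * wnorm2 w (blis F m js ks x - blis F m js ks y) := by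
              apply Finset.sum_le_sum; intro js _
              apply Finset.sum_le_sum; intro ks _
              exact (step _ _).2
          _ = C * (∑ js : Fin m → Fin (J + 2), ∑ ks : Fin m → Fin 2,
                wnorm2 w (blis F m js ks x - blis F m js ks y)) := by
              rw [Finset.mul_sum]
              apply Finset.sum_congr rfl; intro js _; rw [Finset.mul_sum]
          _ ≤ C * (C^m * wnorm2 w (x - y)) := mul_le_mul_of_nonneg_left (ih x y).2 hC0
          _ = C^(m+1) * wnorm2 w (x - y) := by ring
  intro m _ x y
  exact main m x y
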